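/- Let t be a β(1,0)-tree with root label k, let 1 ≤ i ≤ k, and let λ(i, t) be the β(1,0)-tree obtained from t by joining a new root via an edge to the old root, both the new root and the old root receiving the label i. Then: leaves(λ(i,t)) = leaves(t); root(λ(i,t)) = i; lpath(λ(i,t)) = lpath(t) + 1; rpath(λ(i,t)) = rpath(t) + 1; lsub(λ(i,t)) = lsub(t) + 1 if i = 1 and lsub(λ(i,t)) = lsub(t) if i > 1; stem′(λ(i,t)) = i if i ≤ stem′(t) and stem′(λ(i,t)) = stem′(t) if i > stem′(t). -/

import Mathlib

/-
Common definitions: permutations of {1,…,n} as words (lists), dashed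
pattern avoidance, permutation statistics, and β(1,0)-trees with their
statistics, following the paper
"Decompositions and statistics for β(1,0)-trees and nonseparable permutations".
-/

namespace Beta10

attribute [local instance] Classical.propDecidable

/-- `l` is a permutation of `{1, …, n}` (written as a word). -/
def IsPermOf (n : ℕ) (l : List ℕ) : Prop := l.Perm (List.range' 1 n)

/-- an occurrence of the dashed pattern 3-1-4-2 at positions `i < j < k < m` -/
def occ3142 (l : List ℕ) (i j k m : ℕ) : Prop :=
  i < j ∧ j < k ∧ k < m ∧ m < l.length ∧
  l.getD j 0 < l.getD m 0 ∧ l.getD m 0 < l.getD i 0 ∧ l.getD i 0 < l.getD k 0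

def pat3142 (l : List ℕ) : Prop := ∃ i j k m, occ3142 l i j k m

/-- an occurrence of the dashed pattern 2-41-3 at positions `i < j, j+1 < k` -/
def occ2413 (l : List ℕ) (i j k : ℕ) : Prop :=
  i < j ∧ j + 1 < k ∧ k < l.length ∧
  l.getD (j+1) 0 < l.getD i 0 ∧ l.getD i 0 < l.getD k 0 ∧ l.getD k 0 < l.getD j 0

def pat2413 (l : List ℕ) : Prop := ∃ i j k, occ2413 l i j k

/-- an *avoider*: a permutation of `{1,…,n}` avoiding 3-1-4-2 and 2-41-3 -/
def Avoider (n : ℕ) (l : List ℕ) : Prop := IsPermOf n l ∧ ¬ pat3142 l ∧ ¬ pat2413 l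

/-- direct sum of permutations -/
def dsum (σ τ : List ℕ) : List ℕ := σ ++ τ.map (· + σ.length)

/-- a nonempty permutation that is not a direct sum of two nonempty permutations -/
def Indecomposable (l : List ℕ) : Prop :=
  l ≠ [] ∧ ¬ ∃ σ τ : List ℕ, σ ≠ [] ∧ τ ≠ [] ∧ l = dsum σ τ

/-- position `p` holds a left-to-right maximum of `l` -/
def IsLRMax (l : List ℕ) (p : ℕ) : Prop :=
  p < l.length ∧ ∀ j < p, l.getD j 0 < l.getD p 0

/-- position `p` holds a left-to-right minimum of `l` -/
def IsLRMin (l : List ℕ) (p : ℕ) : Prop :=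
  p < l.length ∧ ∀ j < p, l.getD p 0 < l.getD j 0

/-- position `p` holds a right-to-left maximum of `l` -/
def IsRLMax (l : List ℕ) (p : ℕ) : Prop :=
  p < l.length ∧ ∀ j < l.length, p < j → l.getD j 0 < l.getD p 0

/-- the number of left-to-right maxima -/
noncomputable def lmax (l : List ℕ) : ℕ :=
  ((Finset.range l.length).filter (fun p => IsLRMax l p)).card

/-- the number of left-to-right minima -/
noncomputable def lmin (l : List ℕ) : ℕ :=
  ((Finset.range l.length).filter (fun p => IsLRMin l p)).card

/-- the number of right-to-left maxima -/
noncomputable def rmax (l : List ℕ) : ℕ :=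
  ((Finset.range l.length).filter (fun p => IsRLMax l p)).card

/-- the number of ascents -/
noncomputable def asc (l : List ℕ) : ℕ :=
  ((Finset.range (l.length - 1)).filter (fun p => l.getD p 0 < l.getD (p+1) 0)).card

/-- the number of descents -/
noncomputable def des (l : List ℕ) : ℕ :=
  ((Finset.range (l.length - 1)).filter (fun p => l.getD (p+1) 0 < l.getD p 0)).card

/-- `ldr l` : the largest `i` with `a₁ > a₂ > ⋯ > aᵢ` (and `0` for the empty word) -/
noncomputable def ldr (l : List ℕ) : ℕ :=
  ((Finset.range (l.length + 1)).filter
    (fun i => ∀ j, j + 1 < i → l.getD (j+1) 0 < l.getD j 0)).sup id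

/-- `lir l` : the largest `i` with `a₁ < a₂ < ⋯ < aᵢ` (and `0` for the empty word) -/
noncomputable def lir (l : List ℕ) : ℕ :=
  ((Finset.range (l.length + 1)).filter
    (fun i => ∀ j, j + 1 < i → l.getD j 0 < l.getD (j+1) 0)).sup id

/-- the factor of `l` occupying positions `p, …, q-1` is a component of `l`:
it is nonempty, all letters before it are smaller, all letters after it are
larger, and it admits no nontrivial splitting `αβ` with `α ≺ β`. -/
def IsComponent (l : List ℕ) (p q : ℕ) : Prop :=
  p < q ∧ q ≤ l.length ∧
  (∀ i < p, ∀ j, p ≤ j → j < q → l.getD i 0 < l.getD j 0) ∧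
  (∀ j, p ≤ j → j < q → ∀ i, q ≤ i → i < l.length → l.getD j 0 < l.getD i 0) ∧
  ¬ ∃ r, p < r ∧ r < q ∧ ∀ i, p ≤ i → i < r → ∀ j, r ≤ j → j < q → l.getD i 0 < l.getD j 0

/-- the number of components of `l` -/
noncomputable def comp (l : List ℕ) : ℕ :=
  (((Finset.range (l.length + 1)) ×ˢ (Finset.range (l.length + 1))).filter
    (fun pq => IsComponent l pq.1 pq.2)).card

/-- insert the letter `a` into `l` so that it occupies (0-based) position `r` -/
def insertAt (l : List ℕ) (r : ℕ) (a : ℕ) : List ℕ := l.take r ++ a :: l.drop r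

/-- the (0-based) positions of the left-to-right maxima, from left to right -/
noncomputable def lrMaxPos (l : List ℕ) : List ℕ :=
  (List.range l.length).filter (fun p => decide (IsLRMax l p))

/-- the finite set of avoiders of `{1,…,n}` -/
noncomputable def avoidersFinset (n : ℕ) : Finset (List ℕ) :=
  ((List.range' 1 n).permutations.toFinset).filter (fun l => ¬ pat3142 l ∧ ¬ pat2413 l)

/-- reverse of a permutation -/
def revP (l : List ℕ) : List ℕ := l.reverse

/-- complement of a permutation of `{1,…,n}` -/
def complP (n : ℕ) (l : List ℕ) : List ℕ := l.map (fun a => n + 1 - a)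

/-- inverse of a permutation of `{1,…,n}` (as a word: the `v`-th letter is the
position of the letter `v` in `l`, 1-based) -/
def invP (l : List ℕ) : List ℕ :=
  (List.range' 1 l.length).map (fun v => l.idxOf v + 1)

/-- rooted plane trees with nodes labeled by natural numbers -/
inductive PTree : Type where
  | node : ℕ → List PTree → PTree

namespace PTree

/-- the label of the root -/
def label : PTree → ℕ | node l _ => l

/-- the list of subtrees of the root -/
def children : PTree → List PTree | node _ cs => cs

/-- the number of nodes -/
def size : PTree → ℕ
  | node _ cs => 1 + (cs.attach.map (fun x => size x.1)).sum
decreasing_by have := List.sizeOf_lt_of_mem x.2; simp at this ⊢; omega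

/-- the number of leaves -/
def leaves : PTree → ℕ
  | node _ [] => 1
  | node _ (c :: cs) => ((c :: cs).attach.map (fun x => leaves x.1)).sum
decreasing_by have := List.sizeOf_lt_of_mem x.2; simp at this ⊢; omega

/-- the number of internal (non-leaf) nodes; the root counts as internal -/
def internalN : PTree → ℕ
  | node _ [] => 0
  | node _ (c :: cs) => 1 + ((c :: cs).attach.map (fun x => internalN x.1)).sum
decreasing_by have := List.sizeOf_lt_of_mem x.2; simp at this ⊢; omega

/-- the number of children of the root -/
def subT (t : PTree) : ℕ := t.children.length

/-- the number of edges on the path from the root to the leftmost leaf -/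
def lpath : PTree → ℕ
  | node _ [] => 0
  | node _ (c :: _) => lpath c + 1

mutual
/-- the number of edges on the path from the root to the rightmost leaf -/
def rpath : PTree → ℕ
  | .node _ [] => 0
  | .node _ (c :: cs) => rpathAux c cs + 1
termination_by t => sizeOf t
def rpathAux : PTree → List PTree → ℕ
  | c, [] => rpath c
  | _, c' :: cs => rpathAux c' cs
termination_by c cs => sizeOf c + sizeOf cs
end

/-- the number of nodes with label 1, other than the root, on the path from
the root to the leftmost leaf -/
def lsub : PTree → ℕ
  | node _ [] => 0
  | node _ (c :: _) => lsub c + (if c.label = 1 then 1 else 0)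

mutual
/-- the number of nodes with label 1, other than the root, on the path from
the root to the rightmost leaf -/
def rsub : PTree → ℕ
  | .node _ [] => 0
  | .node _ (c :: cs) => rsubAux c cs
termination_by t => sizeOf t
def rsubAux : PTree → List PTree → ℕ
  | c, [] => rsub c + (if c.label = 1 then 1 else 0)
  | _, c' :: cs => rsubAux c' cs
termination_by c cs => sizeOf c + sizeOf cs
end

/-- the number of internal nodes common to the left path and the right path -/
def stem : PTree → ℕ
  | node _ [] => 0
  | node _ [c] => stem c + 1
  | node _ (_ :: _ :: _) => 1

/-- `tsum u v = u ⊕ v`: the subtrees of the root are those of `u` followed by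
those of `v`, and the root label is the sum of the root labels -/
def tsum (u v : PTree) : PTree := node (u.label + v.label) (u.children ++ v.children)

/-- `lam i t = λ(i, t)`: join a new root via an edge to the old root; both the
new root and the old root get the label `i` -/
def lam (i : ℕ) (t : PTree) : PTree := node i [node i t.children]

/-- the one-edge tree (two nodes, both labeled 1) -/
def edgeT : PTree := node 1 [node 1 []]

/-- `iterEdge k = ⊕^k edgeT`, the `k`-fold sum of one-edge trees -/
def iterEdge : ℕ → PTree
  | 0 => node 0 []
  | k + 1 => tsum edgeT (iterEdge k)

/-- does the path from the root to the leftmost leaf contain a node,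
other than the leaf itself, with label 1? -/
def leftPathOne : PTree → Bool
  | node _ [] => false
  | node l (c :: _) => (l == 1) || leftPathOne c

/-- delete the leftmost leaf and decrease by 1 the labels of all nodes on the
path from the root to it -/
def delLeft : PTree → PTree
  | node l [] => node l []
  | node l (node _ [] :: cs) => node (l - 1) cs
  | node l (c :: cs) => node (l - 1) (delLeft c :: cs)

/-- iterate: if the path from the root to the leftmost leaf contains a node
(other than that leaf) with label 1, stop and report 1 plus the number of
leaves already deleted; otherwise delete the leftmost leaf (decreasing the
labels on its path) and continue -/
def stemGo : ℕ → PTree → ℕ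
  | 0, _ => 0
  | fuel + 1, t => if leftPathOne t then 1 else 1 + stemGo fuel (delLeft t)

/-- the statistic stem′ of the paper: the index of the first leaf (from the
left) whose path to the root contains a node, other than the leaf itself,
with label 1, in the iterated leaf-deletion process -/
def stemP (t : PTree) : ℕ := stemGo t.size t

/-- the mirror image: recursively reverse the order of subtrees -/
def mirror : PTree → PTree
  | node l cs => node l ((cs.attach.map (fun x => mirror x.1)).reverse)
decreasing_by have := List.sizeOf_lt_of_mem x.2; simp at this ⊢; omega

/-- the statistic stem~ : stem′ of the mirror image -/
def stemM (t : PTree) : ℕ := stemP (mirror t)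

/-- `obs u v = u ⊘ v`: identify the rightmost leaf of `u` with the root of `v`;
the identified node gets label 1 -/
def obs : PTree → PTree → PTree
  | node _ [], v => node 1 v.children
  | node l [c], v => node l [obs c v]
  | node l (c :: c' :: cs), v => node l (c :: (obs (node l (c' :: cs)) v).children)
termination_by u _ => sizeOf u
decreasing_by all_goals (simp; try omega)

/-- validity of a non-root node of a β(1,0)-tree (together with all of its
descendants): a leaf has label 1, and any other node has a positive label
that is at most the sum of its children's labels -/
inductive IsBetaSub : PTree → Prop where
  | mk (l : ℕ) (cs : List PTree)
      (hleaf : cs = [] → l = 1)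
      (hinternal : cs ≠ [] → 1 ≤ l ∧ l ≤ (cs.map label).sum)
      (hchildren : ∀ c ∈ cs, IsBetaSub c) : IsBetaSub (node l cs)

end PTree

/-- `t` is a β(1,0)-tree: the root label equals the sum of the children's
labels, and every non-root node is valid -/
def IsBeta (t : PTree) : Prop :=
  t.label = (t.children.map PTree.label).sum ∧ ∀ c ∈ t.children, PTree.IsBetaSub c

end Beta10

namespace Beta10
open PTree


lemma size_pos (t : PTree) : 1 ≤ t.size := by
  obtain ⟨l, cs⟩ := t; rw [size]; omega

lemma labelSub_le_size : ∀ c : PTree, IsBetaSub c → c.label ≤ c.size := by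
  intro c h
  induction h with
  | mk l cs hleaf hint hch ih =>
    rw [PTree.label, PTree.size]
    have h1 : (cs.attach.map (fun x => PTree.size x.1)) = cs.map PTree.size := by
      simp
    rw [h1]
    rcases eq_or_ne cs [] with h | h
    · simp [hleaf h]
    · have h2 := hint h
      have h3 : (cs.map PTree.label).sum ≤ (cs.map PTree.size).sum :=
        List.sum_le_sum (by simpa using ih)
      omega



lemma beta_children_ne (t : PTree) (hb : IsBeta t) (h : 1 ≤ t.label) : t.children ≠ [] := by
  obtain ⟨l, cs⟩ := t
  obtain ⟨h1, -⟩ := hb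
  intro hcs
  simp only [PTree.children] at hcs
  subst hcs
  simp [PTree.label, PTree.children] at h1 h
  omega

lemma label_le_size (t : PTree) (hb : IsBeta t) : t.label ≤ t.size := by
  obtain ⟨l, cs⟩ := t
  obtain ⟨h1, h2⟩ := hb
  simp only [PTree.label, PTree.children] at h1 h2 ⊢
  rw [PTree.size]
  have h0 : (cs.attach.map (fun x => PTree.size x.1)) = cs.map PTree.size := by simp
  have h3 : (cs.map PTree.label).sum ≤ (cs.map PTree.size).sum :=
    List.sum_le_sum (fun c hc => labelSub_le_size c (h2 c hc))
  rw [h0]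
  omega

theorem betaSub_delLeft : ∀ c : PTree, IsBetaSub c → c.children ≠ [] → leftPathOne c = false →
    IsBetaSub (delLeft c) ∧ (delLeft c).label = c.label - 1 ∧ 2 ≤ c.label
  | node x [], _, hne, _ => (hne rfl).elim
  | node x (node y [] :: rest), h, _, hlp => by
    cases h with
    | mk _ _ hleaf hint hch =>
      have hx := hint (by simp)
      have hy : (node y ([]:List PTree)).label = 1 := by
        have := hch (node y []) (by simp)
        cases this with
        | mk _ _ hleaf2 _ _ => simpa [PTree.label] using hleaf2 rfl
      simp only [PTree.label] at hy
      subst hy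
      simp only [leftPathOne, Bool.or_eq_false_iff, beq_eq_false_iff_ne, ne_eq] at hlp
      have hx2 : 2 ≤ x := by omega
      simp only [PTree.label, List.map_cons, List.sum_cons] at hx
      have hrest : rest ≠ [] := by
        intro hr; subst hr; simp at hx; omega
      refine ⟨?_, ?_, ?_⟩
      · rw [delLeft]
        exact ⟨x - 1, rest, fun hr => absurd hr hrest,
          fun _ => ⟨by omega, by omega⟩, fun c hc => hch c (by simp [hc])⟩
      · simp [delLeft, PTree.label]
      · simpa [PTree.label] using hx2
  | node x (node y (e :: es) :: rest), h, _, hlp => by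
    cases h with
    | mk _ _ hleaf hint hch =>
      have hx := hint (by simp)
      simp only [leftPathOne, Bool.or_eq_false_iff, beq_eq_false_iff_ne, ne_eq] at hlp
      have hsub := hch (node y (e :: es)) (by simp)
      have IH := betaSub_delLeft (node y (e :: es)) hsub (by simp [PTree.children])
        (by simp only [leftPathOne, Bool.or_eq_false_iff, beq_eq_false_iff_ne, ne_eq]
            exact hlp.2)
      obtain ⟨IH1, IH2, IH3⟩ := IH
      have IH2' : (delLeft (node y (e :: es))).label = y - 1 := IH2
      have IH3' : 2 ≤ y := IH3
      simp only [PTree.label, List.map_cons, List.sum_cons] at hx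
      have hx2 : 2 ≤ x := by
        rcases hx with ⟨hx1, -⟩
        rcases Nat.lt_or_ge x 2 with h | h
        · omega
        · omega
      have hdel : delLeft (node x (node y (e :: es) :: rest))
          = node (x-1) (delLeft (node y (e :: es)) :: rest) := by
        simp [delLeft]
      rw [hdel]
      refine ⟨?_, by simp [PTree.label], by simpa [PTree.label] using hx2⟩
      refine ⟨x - 1, delLeft (node y (e :: es)) :: rest, by simp, fun _ => ⟨by omega, ?_⟩, ?_⟩
      · rw [List.map_cons, List.sum_cons, IH2']
        omega
      · intro c hc
        rcases List.mem_cons.mp hc with rfl | hc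
        · exact IH1
        · exact hch c (by simp [hc])
termination_by c => sizeOf c
decreasing_by simp; omega

lemma beta_step (t : PTree) (hb : IsBeta t) (h1 : 1 ≤ t.label) (hlp : leftPathOne t = false) :
    IsBeta (delLeft t) ∧ (delLeft t).label = t.label - 1 ∧ 2 ≤ t.label := by
  obtain ⟨l, cs⟩ := t
  have hne := beta_children_ne _ hb h1
  simp only [PTree.children] at hne
  obtain ⟨c, rest, rfl⟩ := List.exists_cons_of_ne_nil hne
  obtain ⟨hs, hc⟩ := hb
  simp only [PTree.label, PTree.children, List.map_cons, List.sum_cons] at hs hc h1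
  simp only [leftPathOne, Bool.or_eq_false_iff, beq_eq_false_iff_ne, ne_eq] at hlp
  obtain ⟨y, ys⟩ := c
  cases ys with
  | nil =>
    have hy : y = 1 := by
      have h5 := hc (node y []) (by simp)
      cases h5 with
      | mk _ _ hleaf2 _ _ => simpa [PTree.label] using hleaf2 rfl
    subst hy
    simp only [PTree.label] at hs
    have hl2 : 2 ≤ l := by omega
    have hdel : delLeft (node l (node 1 [] :: rest)) = node (l-1) rest := by
      simp [delLeft]
    rw [hdel]
    refine ⟨⟨?_, ?_⟩, by simp [PTree.label], by simpa [PTree.label] using hl2⟩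
    · show l - 1 = (rest.map PTree.label).sum
      omega
    · intro c hcm
      simp only [PTree.children] at hcm
      exact hc c (by simp [hcm])
  | cons e es =>
    have hsub := hc (node y (e :: es)) (by simp)
    have hy1 : 1 ≤ y := by
      cases hsub with
      | mk _ _ _ hint _ => simpa [PTree.label] using (hint (by simp)).1
    simp only [PTree.label] at hs
    have hl2 : 2 ≤ l := by omega
    have hlpc : leftPathOne (node y (e :: es)) = false := hlp.2
    obtain ⟨IH1, IH2, IH3⟩ := betaSub_delLeft (node y (e :: es)) hsub (by simp [PTree.children]) hlpc
    have IH2' : (delLeft (node y (e :: es))).label = y - 1 := IH2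
    have hdel : delLeft (node l (node y (e :: es) :: rest))
        = node (l-1) (delLeft (node y (e :: es)) :: rest) := by
      simp [delLeft]
    rw [hdel]
    refine ⟨⟨?_, ?_⟩, by simp [PTree.label], by simpa [PTree.label] using hl2⟩
    · show l - 1 = ((delLeft (node y (e :: es)) :: rest).map PTree.label).sum
      rw [List.map_cons, List.sum_cons, IH2']
      omega
    · intro c hcm
      simp only [PTree.children] at hcm
      rcases List.mem_cons.mp hcm with rfl | hcm
      · exact IH1
      · exact hc c (by simp [hcm])

lemma stemGo_succ (fuel : ℕ) (t : PTree) :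
    stemGo (fuel + 1) t = if leftPathOne t then 1 else 1 + stemGo fuel (delLeft t) := rfl

lemma stemGo_stable : ∀ k : ℕ, ∀ t f1 f2, IsBeta t → t.label = k → 1 ≤ k → k ≤ f1 → k ≤ f2 →
    stemGo f1 t = stemGo f2 t := by
  intro k
  induction k with
  | zero => omega
  | succ n ih =>
    intro t f1 f2 hb hl hk hf1 hf2
    obtain ⟨g1, rfl⟩ : ∃ g, f1 = g + 1 := ⟨f1 - 1, by omega⟩
    obtain ⟨g2, rfl⟩ : ∃ g, f2 = g + 1 := ⟨f2 - 1, by omega⟩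
    rw [stemGo_succ, stemGo_succ]
    by_cases hlp : leftPathOne t
    · simp [hlp]
    · obtain ⟨hs1, hs2, hs3⟩ := beta_step t hb (by omega) (by simpa using hlp)
      have := ih (delLeft t) g1 g2 hs1 (by omega) (by omega) (by omega)
      simp only [hlp, if_false, Bool.false_eq_true]
      omega

lemma stemP_of_leftPathOne (t : PTree) (h : leftPathOne t = true) : stemP t = 1 := by
  unfold stemP
  obtain ⟨s, hs⟩ : ∃ s, t.size = s + 1 := ⟨t.size - 1, by have := size_pos t; omega⟩
  rw [hs, stemGo_succ, if_pos h]

lemma stemP_eq (t : PTree) (hb : IsBeta t) (h : 1 ≤ t.label) : stemP t = stemGo t.label t :=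
  stemGo_stable t.label t t.size t.label hb rfl h (label_le_size t hb) le_rfl

lemma stemP_pos (t : PTree) : 1 ≤ stemP t := by
  unfold stemP
  obtain ⟨s, hs⟩ : ∃ s, t.size = s + 1 := ⟨t.size - 1, by have := size_pos t; omega⟩
  rw [hs, stemGo_succ]
  split <;> omega

lemma lam_label (i : ℕ) (t : PTree) : (lam i t).label = i := rfl

lemma beta_lam (t : PTree) (i : ℕ) (hb : IsBeta t) (h1 : 1 ≤ i) (h2 : i ≤ t.label) :
    IsBeta (lam i t) := by
  obtain ⟨l, cs⟩ := t
  obtain ⟨hs, hc⟩ := hb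
  simp only [PTree.label, PTree.children] at hs hc h2
  constructor
  · simp [lam, PTree.label, PTree.children]
  · intro c hcm
    simp only [lam, PTree.children, List.mem_singleton] at hcm
    subst hcm
    refine ⟨i, cs, ?_, fun _ => ⟨h1, by omega⟩, hc⟩
    intro hcs
    subst hcs
    simp at hs
    omega

lemma delLeft_lam (i k : ℕ) (cs : List PTree) (h : cs ≠ []) :
    delLeft (lam i (node k cs)) = lam (i-1) (delLeft (node k cs)) := by
  obtain ⟨c, rest, rfl⟩ := List.exists_cons_of_ne_nil h
  obtain ⟨y, ys⟩ := c
  cases ys <;> simp [lam, delLeft, PTree.children]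

lemma stemP_lam : ∀ i t, IsBeta t → 1 ≤ t.label → 1 ≤ i → i ≤ t.label →
    stemP (lam i t) = min i (stemP t) := by
  intro i
  induction i with
  | zero => omega
  | succ n ih =>
    intro t hb hl h1 h2
    have hblam := beta_lam t (n+1) hb h1 h2
    have hpt : 1 ≤ stemP t := stemP_pos t
    obtain ⟨l, cs⟩ := t
    have hne : cs ≠ [] := by
      have := beta_children_ne _ hb hl
      simpa [PTree.children] using this
    obtain ⟨c, rest, rfl⟩ := List.exists_cons_of_ne_nil hne
    rcases Nat.eq_zero_or_pos n with hn | hn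
    · subst hn
      have h3 : leftPathOne (lam 1 (node l (c :: rest))) = true := by
        simp [lam, leftPathOne]
      rw [stemP_of_leftPathOne _ h3]
      omega
    · by_cases hc : leftPathOne c
      · have ht1 : leftPathOne (node l (c :: rest)) = true := by
          simp [leftPathOne, hc]
        have ht2 : leftPathOne (lam (n+1) (node l (c :: rest))) = true := by
          simp [lam, leftPathOne, hc, PTree.children]
        rw [stemP_of_leftPathOne _ ht2, stemP_of_leftPathOne _ ht1]
        omega
      · simp only [PTree.label] at hl h2
        have hl2 : 2 ≤ l := by omega
        obtain ⟨m, rfl⟩ : ∃ m, l = m + 1 := ⟨l - 1, by omega⟩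
        have ht1 : leftPathOne (node (m+1) (c :: rest)) = false := by
          simp [leftPathOne, hc]
          omega
        have ht2 : leftPathOne (lam (n+1) (node (m+1) (c :: rest))) = false := by
          simp [lam, leftPathOne, hc, PTree.children]
          omega
        obtain ⟨hd1, hd2, -⟩ := beta_step _ hb (by simp [PTree.label]) ht1
        have hd2' : (delLeft (node (m+1) (c :: rest))).label = m := hd2
        have hdll : 1 ≤ (delLeft (node (m+1) (c :: rest))).label := by omega
        have e1 : stemP (node (m+1) (c :: rest)) = 1 + stemP (delLeft (node (m+1) (c :: rest))) := by
          rw [stemP_eq _ hb (by simp [PTree.label])]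
          simp only [PTree.label]
          rw [stemGo_succ, if_neg (by simp [ht1])]
          congr 1
          exact stemGo_stable ((delLeft (node (m+1) (c :: rest))).label) _ m _ hd1 rfl
            (by omega) (by omega) (label_le_size _ hd1)
        have hblam2 : IsBeta (lam n (delLeft (node (m+1) (c :: rest)))) :=
          beta_lam _ n hd1 hn (by omega)
        have e2 : stemP (lam (n+1) (node (m+1) (c :: rest)))
            = 1 + stemP (lam n (delLeft (node (m+1) (c :: rest)))) := by
          rw [stemP_eq _ hblam (by simp [lam_label])]
          rw [lam_label, stemGo_succ, if_neg (by simp [ht2])]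
          rw [delLeft_lam (n+1) (m+1) (c :: rest) (by simp)]
          simp only [Nat.add_sub_cancel]
          congr 1
          exact stemGo_stable ((lam n (delLeft (node (m+1) (c :: rest)))).label) _ n _ hblam2 rfl
            (by simp [lam_label]; omega) (by simp [lam_label]) (label_le_size _ hblam2)
        rw [e1, e2, ih _ hd1 hdll hn (by omega)]
        have := stemP_pos (delLeft (node (m+1) (c :: rest)))
        omega

/-- Statistics of `λ(i, t)` for a β(1,0)-tree `t` with root
label `k` and `1 ≤ i ≤ k`. -/
theorem statement_10 (t : PTree) (k i : ℕ) (hb : IsBeta t) (hk : t.label = k)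
    (hi1 : 1 ≤ i) (hi2 : i ≤ k) :
    (lam i t).leaves = t.leaves ∧
    (lam i t).label = i ∧
    lpath (lam i t) = lpath t + 1 ∧
    rpath (lam i t) = rpath t + 1 ∧
    (i = 1 → lsub (lam i t) = lsub t + 1) ∧
    (1 < i → lsub (lam i t) = lsub t) ∧
    (i ≤ stemP t → stemP (lam i t) = i) ∧
    (stemP t < i → stemP (lam i t) = stemP t) := by
  subst hk
  have hl1 : 1 ≤ t.label := by omega
  have hne := beta_children_ne t hb hl1
  have hstem := stemP_lam i t hb hl1 hi1 hi2
  obtain ⟨l, cs⟩ := t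
  simp only [PTree.children] at hne
  obtain ⟨c, rest, rfl⟩ := List.exists_cons_of_ne_nil hne
  refine ⟨?_, rfl, ?_, ?_, ?_, ?_, ?_, ?_⟩
  · simp [lam, PTree.leaves, PTree.children]
  · simp [lam, lpath, PTree.children]
  · simp [lam, rpath, rpathAux, PTree.children]
  · intro h
    subst h
    simp [lam, lsub, PTree.label, PTree.children]
  · intro h
    have h' : i ≠ 1 := by omega
    simp [lam, lsub, PTree.label, PTree.children, h']
  · intro h
    rw [hstem, min_eq_left h]
  · intro h
    rw [hstem, min_eq_right (le_of_lt h)]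

end Beta10
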